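/- The signature of a triple of Lagrangian planes is antisymmetric: swapping any two arguments changes its sign, e.g. τ(ℓ',ℓ,ℓ'') = -τ(ℓ,ℓ',ℓ'') and τ(ℓ'',ℓ',ℓ) = -τ(ℓ,ℓ',ℓ''). -/
import Mathlib


open Matrix Complex

noncomputable section

/-- Phase space ℝ^{2n} = ℝ^n_x × ℝ^n_p. -/
abbrev V (n : ℕ) := (Fin n → ℝ) × (Fin n → ℝ)

/-- Standard symplectic form σ(z,z') = p·x' - p'·x. -/
def Omega (n : ℕ) (z w : V n) : ℝ := z.2 ⬝ᵥ w.1 - w.2 ⬝ᵥ z.1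

/-- Lagrangian plane: n-dimensional subspace on which σ vanishes. -/
def IsLagrangian (n : ℕ) (L : Submodule ℝ (V n)) : Prop :=
  Module.finrank ℝ L = n ∧ ∀ z ∈ L, ∀ w ∈ L, Omega n z w = 0

/-- Symplectic linear map. -/
def IsSymplectic (n : ℕ) (S : V n →ₗ[ℝ] V n) : Prop :=
  Function.Bijective S ∧ ∀ z w, Omega n (S z) (S w) = Omega n z w

/-- Dimension of a maximal subspace on which Q is positive. -/
def posIndex {E : Type*} [AddCommGroup E] [Module ℝ E] (Q : E → ℝ) : ℕ :=
  sSup {k | ∃ W : Submodule ℝ E, Module.finrank ℝ W = k ∧ ∀ v ∈ W, v ≠ 0 → 0 < Q v}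

def negIndex {E : Type*} [AddCommGroup E] [Module ℝ E] (Q : E → ℝ) : ℕ :=
  posIndex fun v => -Q v

/-- σ(z,z') + σ(z',z'') + σ(z'',z) on ℓ × ℓ' × ℓ''. -/
def tripleForm (n : ℕ) (L L' L'' : Submodule ℝ (V n)) : (L × L' × L'') → ℝ :=
  fun t => Omega n t.1 t.2.1 + Omega n t.2.1 t.2.2 + Omega n t.2.2 t.1

/-- Kashiwara signature τ(ℓ,ℓ',ℓ''). -/
def tau (n : ℕ) (L L' L'' : Submodule ℝ (V n)) : ℤ :=
  (posIndex (tripleForm n L L' L'') : ℤ) - negIndex (tripleForm n L L' L'')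

/-- ∂dim(ℓ,ℓ',ℓ''). -/
def ddim (n : ℕ) (L L' L'' : Submodule ℝ (V n)) : ℤ :=
  (Module.finrank ℝ ↥(L ⊓ L') : ℤ) - Module.finrank ℝ ↥(L ⊓ L'')
    + Module.finrank ℝ ↥(L' ⊓ L'')

/-- Index of inertia. -/
def Inert (n : ℕ) (L L' L'' : Submodule ℝ (V n)) : ℤ :=
  (tau n L L' L'' - ddim n L L' L'' + n) / 2

/-- Real and imaginary parts of a complex matrix. -/
def reM (n : ℕ) (u : Matrix (Fin n) (Fin n) ℂ) : Matrix (Fin n) (Fin n) ℝ :=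
  of fun i j => (u i j).re

def imM (n : ℕ) (u : Matrix (Fin n) (Fin n) ℂ) : Matrix (Fin n) (Fin n) ℝ :=
  of fun i j => (u i j).im

/-- The identification A+iB ↦ [[A,-B],[B,A]] acting on ℝ^{2n}. -/
def uReal (n : ℕ) (u : Matrix (Fin n) (Fin n) ℂ) : V n →ₗ[ℝ] V n where
  toFun z := (reM n u *ᵥ z.1 - imM n u *ᵥ z.2, imM n u *ᵥ z.1 + reM n u *ᵥ z.2)
  map_add' a b := by
    ext i <;> (simp [Matrix.mulVec_add]; try ring)
  map_smul' c a := by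
    ext i <;> (simp [Matrix.mulVec_smul]; try ring)

/-- The momentum plane ℓ_p = 0 × ℝ^n. -/
def ellP (n : ℕ) : Submodule ℝ (V n) := Submodule.prod ⊥ ⊤


lemma posIndex_equiv {E F : Type*} [AddCommGroup E] [Module ℝ E] [AddCommGroup F] [Module ℝ F]
    (e : E ≃ₗ[ℝ] F) (Q : F → ℝ) : posIndex (fun v => Q (e v)) = posIndex Q := by
  unfold posIndex
  congr 1
  ext k
  simp only [Set.mem_setOf_eq]
  constructor
  · rintro ⟨W, hW, hpos⟩
    refine ⟨W.map (e : E →ₗ[ℝ] F), ?_, ?_⟩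
    · rw [LinearEquiv.finrank_map_eq]; exact hW
    · rintro v hv hv0
      obtain ⟨w, hw, rfl⟩ := hv
      exact hpos w hw (by simpa using hv0)
  · rintro ⟨W, hW, hpos⟩
    refine ⟨W.map (e.symm : F →ₗ[ℝ] E), ?_, ?_⟩
    · rw [LinearEquiv.finrank_map_eq]; exact hW
    · rintro v hv hv0
      obtain ⟨w, hw, rfl⟩ := hv
      have hw0 : w ≠ 0 := by simpa using hv0
      simpa using hpos w hw hw0

lemma tau_of_neg_equiv {E F : Type*} [AddCommGroup E] [Module ℝ E] [AddCommGroup F] [Module ℝ F]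
    (e : E ≃ₗ[ℝ] F) (Q : F → ℝ) (Q' : E → ℝ) (h : ∀ t, Q' t = -(Q (e t))) :
    (posIndex Q' : ℤ) - negIndex Q' = -((posIndex Q : ℤ) - negIndex Q) := by
  have h1 : posIndex Q' = negIndex Q := by
    have : Q' = fun t => (fun v => -Q v) (e t) := by funext t; exact h t
    rw [this, posIndex_equiv e (fun v => -Q v)]; rfl
  have h2 : negIndex Q' = posIndex Q := by
    unfold negIndex
    have : (fun t => -Q' t) = fun t => Q (e t) := by
      funext t; rw [h t, neg_neg]
    rw [this, posIndex_equiv e Q]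
  rw [h1, h2]; ring

/-- Swap first two coordinates. -/
def swap12 {A B C : Type*} [AddCommGroup A] [AddCommGroup B] [AddCommGroup C]
    [Module ℝ A] [Module ℝ B] [Module ℝ C] : (B × A × C) ≃ₗ[ℝ] (A × B × C) where
  toFun t := (t.2.1, t.1, t.2.2)
  invFun t := (t.2.1, t.1, t.2.2)
  map_add' _ _ := rfl
  map_smul' _ _ := rfl
  left_inv _ := rfl
  right_inv _ := rfl

/-- Swap outer coordinates. -/
def swap13 {A B C : Type*} [AddCommGroup A] [AddCommGroup B] [AddCommGroup C]
    [Module ℝ A] [Module ℝ B] [Module ℝ C] : (C × B × A) ≃ₗ[ℝ] (A × B × C) where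
  toFun t := (t.2.2, t.2.1, t.1)
  invFun t := (t.2.2, t.2.1, t.1)
  map_add' _ _ := rfl
  map_smul' _ _ := rfl
  left_inv _ := rfl
  right_inv _ := rfl

/-- Swap last two coordinates. -/
def swap23 {A B C : Type*} [AddCommGroup A] [AddCommGroup B] [AddCommGroup C]
    [Module ℝ A] [Module ℝ B] [Module ℝ C] : (A × C × B) ≃ₗ[ℝ] (A × B × C) where
  toFun t := (t.1, t.2.2, t.2.1)
  invFun t := (t.1, t.2.2, t.2.1)
  map_add' _ _ := rfl
  map_smul' _ _ := rfl
  left_inv _ := rfl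
  right_inv _ := rfl

/-- the signature is antisymmetric under swapping any two arguments. -/
theorem tau_antisymmetric (n : ℕ) (L L' L'' : Submodule ℝ (V n))
    (hL : IsLagrangian n L) (hL' : IsLagrangian n L') (hL'' : IsLagrangian n L'') :
    tau n L' L L'' = -tau n L L' L'' ∧
    tau n L'' L' L = -tau n L L' L'' ∧
    tau n L L'' L' = -tau n L L' L'' := by
  refine ⟨?_, ?_, ?_⟩
  · exact tau_of_neg_equiv (swap12 (A := L) (B := L') (C := L'')) _ _
      (by intro t; simp [tripleForm, Omega, swap12]; ring)
  · exact tau_of_neg_equiv (swap13 (A := L) (B := L') (C := L'')) _ _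
      (by intro t; simp [tripleForm, Omega, swap13]; ring)
  · exact tau_of_neg_equiv (swap23 (A := L) (B := L') (C := L'')) _ _
      (by intro t; simp [tripleForm, Omega, swap23]; ring)
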